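/- Let V be a finite vertex set, G a simple graph on V, Z ⊆ V a set of perturbed nodes, and for each i ∈ V let S i be a nonempty finite type and for each i ∈ Z let T i be a nonempty finite type. Suppose the joint weight P(y,u) = ∏_{q ∈ Q} Ψ_q(y restricted to q) · ∏_{i ∈ Z} Ψ_i(y i, u i) is a finite product where each q ∈ Q is a clique of G and all factors are nonnegative, and let f denote the observed marginal obtained by summing P over the hidden coordinates (y i for i ∈ Z), viewed as a function of the observed variables (y i for i ∉ Z and u i for i ∈ Z), indexed by V. If two distinct nodes p and q are NOT adjacent in the perturbed graph G_Z, then the observed marginal f satisfies the pairwise conditional-independence identity at (p,q): for every observed configuration x and all values a, a' at p and b, b' at q, f(x[p:=a][q:=b]) · f(x[p:=a'][q:=b']) = f(x[p:=a][q:=b']) · f(x[p:=a'][q:=b]). (This is the separation direction of Theorem 4: non-neighbors in the perturbed graph are conditionally independent given all other observed variables.) -/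

import Mathlib

open scoped NNReal

section Reach
variable {V : Type*} (G : SimpleGraph V) (Z : Set V) (p : V)

def Reach (v : V) : Prop :=
  ∃ w : G.Walk p v, ∀ x ∈ w.support, x ≠ p → x ≠ v → x ∈ Z

lemma reach_self : Reach G Z p p :=
  ⟨SimpleGraph.Walk.nil, by simp⟩

variable {G Z p}

lemma reach_adj {v w : V} (hv : Reach G Z p v) (hvZ : v ∈ Z ∨ v = p)
    (h : G.Adj v w) : Reach G Z p w := by
  obtain ⟨W, hW⟩ := hv
  refine ⟨W.concat h, fun x hx hxp hxw => ?_⟩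
  rw [SimpleGraph.Walk.support_concat, List.mem_append,
    List.mem_singleton] at hx
  rcases hx with hx | hx
  · by_cases hxv : x = v
    · subst hxv
      exact hvZ.resolve_right hxp
    · exact hW x hx hxp hxv
  · exact absurd hx hxw

lemma clique_reach {c : Set V} (hc : G.IsClique c) {v : V} (hvc : v ∈ c)
    (hv : Reach G Z p v) (hvZ : v ∈ Z ∨ v = p) {w : V} (hw : w ∈ c) :
    Reach G Z p w := by
  by_cases hwv : w = v
  · exact hwv ▸ hv
  · exact reach_adj hv hvZ (hc hvc hw (fun e => hwv e.symm))

end Reach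

/-- The adjacency relation of the perturbed graph `G_Z`: `p` and `q` (distinct) are
neighbors in `G_Z` iff there is a walk in `G` from `p` to `q` all of whose
intermediate vertices lie in `Z`. -/
def PerturbedAdj {V : Type*} (G : SimpleGraph V) (Z : Set V) (p q : V) : Prop :=
  p ≠ q ∧ ∃ w : G.Walk p q, ∀ v ∈ w.support, v ≠ p → v ≠ q → v ∈ Z

/-- separation direction of Theorem 4: if `p` and `q` are not
adjacent in the perturbed graph `G_Z`, then the observed marginal `f` (obtained from
the clique-factorized joint weight by summing out the hidden coordinates `y i`,
`i ∈ Z`) satisfies the pairwise conditional-independence identity at `(p,q)`.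
The observed value at a vertex `i` is `y i` if `i ∉ Z` and `u i` if `i ∈ Z`;
updates are performed jointly on both components, on which `f` depends only through
the observed one. -/
theorem stmt12 {V : Type*} [Fintype V] [DecidableEq V] (G : SimpleGraph V)
    (Z : Finset V)
    (S : V → Type*) [∀ i, Fintype (S i)] [∀ i, Nonempty (S i)]
    (T : V → Type*) [∀ i, Fintype (T i)] [∀ i, Nonempty (T i)]
    (m : ℕ) (q0 : Fin m → Set V) (hq0 : ∀ k, G.IsClique (q0 k))
    (Ψ : Fin m → (∀ i, S i) → ℝ≥0)
    (hΨ : ∀ k (y y' : ∀ i, S i), (∀ v ∈ q0 k, y v = y' v) → Ψ k y = Ψ k y')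
    (Ψp : ∀ i : V, S i → T i → ℝ≥0)
    (P : (∀ i, S i) → (∀ i, T i) → ℝ≥0)
    (hP : ∀ y u, P y u = (∏ k, Ψ k y) * ∏ i ∈ Z, Ψp i (y i) (u i))
    (f : (∀ i, S i) → (∀ i, T i) → ℝ≥0)
    (hf : ∀ yb u, f yb u =
      ∑ h : (∀ i : {x // x ∈ Z}, S i),
        P (fun i => if hi : i ∈ Z then h ⟨i, hi⟩ else yb i) u)
    (p q : V) (hpq : p ≠ q) (hnadj : ¬ PerturbedAdj G (↑Z) p q) :
    ∀ (x : ∀ i, S i) (w : ∀ i, T i)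
      (a a' : S p) (ta ta' : T p) (b b' : S q) (tb tb' : T q),
      f (Function.update (Function.update x p a) q b)
          (Function.update (Function.update w p ta) q tb) *
        f (Function.update (Function.update x p a') q b')
          (Function.update (Function.update w p ta') q tb') =
      f (Function.update (Function.update x p a) q b')
          (Function.update (Function.update w p ta) q tb') *
        f (Function.update (Function.update x p a') q b)
          (Function.update (Function.update w p ta') q tb) := by
  classical
  -- basic facts about the reachable set
  have hAp : Reach G (↑Z) p p := reach_self G (↑Z) p
  have hAq : ¬ Reach G (↑Z) p q := fun h => hnadj ⟨hpq, h⟩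
  have hclq : ∀ k (v : V), v ∈ q0 k → Reach G (↑Z) p v → (v ∈ Z ∨ v = p) →
      ∀ w' ∈ q0 k, Reach G (↑Z) p w' := by
    intro k v hvc hv hvZ w' hw'
    exact clique_reach (hq0 k) hvc hv (by simpa using hvZ) hw'
  have hsplit : ∀ k, ¬ (∀ v ∈ q0 k, Reach G (↑Z) p v) →
      ∀ v ∈ q0 k, (v ∈ Z → ¬ Reach G (↑Z) p v) ∧ v ≠ p := by
    intro k hk v hv
    constructor
    · intro hvZ hvR
      exact hk (hclq k v hv hvR (Or.inl hvZ))
    · rintro rfl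
      exact hk (hclq k v hv hAp (Or.inr rfl))
  obtain ⟨FF, GG, key, hFq, hGp⟩ :
      ∃ (FF GG : (∀ i, S i) → (∀ i, T i) → ℝ≥0),
        (∀ yb u, f yb u = FF yb u * GG yb u) ∧
        (∀ yb u (bb : S q) (tbb : T q),
          FF (Function.update yb q bb) (Function.update u q tbb) = FF yb u) ∧
        (∀ yb u (aa : S p) (taa : T p),
          GG (Function.update yb p aa) (Function.update u p taa) = GG yb u) := by
    refine ⟨fun yb u =>
      ∑ hA : (∀ i : {i : {x // x ∈ Z} // Reach G (↑Z) p ↑i}, S ↑↑i),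
        (∏ k ∈ Finset.univ.filter (fun k => ∀ v ∈ q0 k, Reach G (↑Z) p v),
          Ψ k (fun i => if hi : i ∈ Z ∧ Reach G (↑Z) p i
            then hA ⟨⟨i, hi.1⟩, hi.2⟩ else yb i)) *
        ∏ i ∈ Z.filter (fun i => Reach G (↑Z) p i),
          Ψp i (if hi : i ∈ Z ∧ Reach G (↑Z) p i
            then hA ⟨⟨i, hi.1⟩, hi.2⟩ else yb i) (u i),
      fun yb u =>
      ∑ hB : (∀ i : {i : {x // x ∈ Z} // ¬ Reach G (↑Z) p ↑i}, S ↑↑i),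
        (∏ k ∈ Finset.univ.filter (fun k => ¬ ∀ v ∈ q0 k, Reach G (↑Z) p v),
          Ψ k (fun i => if hi : i ∈ Z ∧ ¬ Reach G (↑Z) p i
            then hB ⟨⟨i, hi.1⟩, hi.2⟩ else yb i)) *
        ∏ i ∈ Z.filter (fun i => ¬ Reach G (↑Z) p i),
          Ψp i (if hi : i ∈ Z ∧ ¬ Reach G (↑Z) p i
            then hB ⟨⟨i, hi.1⟩, hi.2⟩ else yb i) (u i),
      ?_, ?_, ?_⟩
    · -- factorization
      intro yb u
      rw [hf]
      simp only [hP]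
      rw [Finset.sum_mul_sum]
      rw [← Equiv.sum_comp (Equiv.piEquivPiSubtypeProd
        (fun i : {x // x ∈ Z} => Reach G (↑Z) p ↑i) (fun i => S ↑i)).symm]
      rw [Fintype.sum_prod_type]
      refine Finset.sum_congr rfl fun hA _ => Finset.sum_congr rfl fun hB _ => ?_
      set yS : ∀ i, S i := fun i => if hi : i ∈ Z then
        (Equiv.piEquivPiSubtypeProd
          (fun i : {x // x ∈ Z} => Reach G (↑Z) p ↑i) (fun i => S ↑i)).symm
          (hA, hB) ⟨i, hi⟩ else yb i with hyS
      have lA : ∀ v, Reach G (↑Z) p v → yS v =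
          (if hi : v ∈ Z ∧ Reach G (↑Z) p v then hA ⟨⟨v, hi.1⟩, hi.2⟩ else yb v) := by
        intro v hv
        by_cases hz : v ∈ Z
        · simp [hyS, hz, hv, Equiv.piEquivPiSubtypeProd]
        · simp [hyS, hz, fun h : v ∈ Z ∧ _ => hz h.1]
      have lB : ∀ v, (v ∈ Z → ¬ Reach G (↑Z) p v) → yS v =
          (if hi : v ∈ Z ∧ ¬ Reach G (↑Z) p v then hB ⟨⟨v, hi.1⟩, hi.2⟩ else yb v) := by
        intro v hv
        by_cases hz : v ∈ Z
        · simp [hyS, hz, hv hz, Equiv.piEquivPiSubtypeProd]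
        · simp [hyS, hz, fun h : v ∈ Z ∧ _ => hz h.1]
      rw [← Finset.prod_filter_mul_prod_filter_not Finset.univ
        (fun k => ∀ v ∈ q0 k, Reach G (↑Z) p v) (fun k => Ψ k yS)]
      rw [← Finset.prod_filter_mul_prod_filter_not Z
        (fun i => Reach G (↑Z) p i) (fun i => Ψp i (yS i) (u i))]
      have eFA : (∏ k ∈ Finset.univ.filter (fun k => ∀ v ∈ q0 k, Reach G (↑Z) p v),
          Ψ k yS) = ∏ k ∈ Finset.univ.filter (fun k => ∀ v ∈ q0 k, Reach G (↑Z) p v),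
          Ψ k (fun i => if hi : i ∈ Z ∧ Reach G (↑Z) p i
            then hA ⟨⟨i, hi.1⟩, hi.2⟩ else yb i) := by
        refine Finset.prod_congr rfl fun k hk => ?_
        rw [Finset.mem_filter] at hk
        exact hΨ k _ _ fun v hv => lA v (hk.2 v hv)
      have eGB : (∏ k ∈ Finset.univ.filter (fun k => ¬ ∀ v ∈ q0 k, Reach G (↑Z) p v),
          Ψ k yS) = ∏ k ∈ Finset.univ.filter (fun k => ¬ ∀ v ∈ q0 k, Reach G (↑Z) p v),
          Ψ k (fun i => if hi : i ∈ Z ∧ ¬ Reach G (↑Z) p i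
            then hB ⟨⟨i, hi.1⟩, hi.2⟩ else yb i) := by
        refine Finset.prod_congr rfl fun k hk => ?_
        rw [Finset.mem_filter] at hk
        exact hΨ k _ _ fun v hv => lB v ((hsplit k hk.2 v hv).1)
      have ePA : (∏ i ∈ Z.filter (fun i => Reach G (↑Z) p i),
          Ψp i (yS i) (u i)) =
          ∏ i ∈ Z.filter (fun i => Reach G (↑Z) p i),
          Ψp i (if hi : i ∈ Z ∧ Reach G (↑Z) p i
            then hA ⟨⟨i, hi.1⟩, hi.2⟩ else yb i) (u i) := by
        refine Finset.prod_congr rfl fun i hi => ?_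
        rw [Finset.mem_filter] at hi
        rw [lA i hi.2]
      have ePB : (∏ i ∈ Z.filter (fun i => ¬ Reach G (↑Z) p i),
          Ψp i (yS i) (u i)) =
          ∏ i ∈ Z.filter (fun i => ¬ Reach G (↑Z) p i),
          Ψp i (if hi : i ∈ Z ∧ ¬ Reach G (↑Z) p i
            then hB ⟨⟨i, hi.1⟩, hi.2⟩ else yb i) (u i) := by
        refine Finset.prod_congr rfl fun i hi => ?_
        rw [Finset.mem_filter] at hi
        rw [lB i (fun _ => hi.2)]
      rw [eFA, eGB, ePA, ePB]
      ring
    · -- FF does not depend on the coordinate at q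
      intro yb u bb tbb
      refine Finset.sum_congr rfl fun hA _ => ?_
      have harg : ∀ v : V, Reach G (↑Z) p v →
          (if hi : v ∈ Z ∧ Reach G (↑Z) p v then hA ⟨⟨v, hi.1⟩, hi.2⟩
            else Function.update yb q bb v) =
          (if hi : v ∈ Z ∧ Reach G (↑Z) p v then hA ⟨⟨v, hi.1⟩, hi.2⟩ else yb v) := by
        intro v hv
        have hvq : v ≠ q := fun e => hAq (e ▸ hv)
        by_cases hz : v ∈ Z ∧ Reach G (↑Z) p v
        · simp [hz]
        · simp [hz, Function.update_of_ne hvq]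
      congr 1
      · refine Finset.prod_congr rfl fun k hk => ?_
        rw [Finset.mem_filter] at hk
        exact hΨ k _ _ fun v hv => harg v (hk.2 v hv)
      · refine Finset.prod_congr rfl fun i hi => ?_
        rw [Finset.mem_filter] at hi
        have hiq : i ≠ q := fun e => hAq (e ▸ hi.2)
        rw [harg i hi.2, Function.update_of_ne hiq]
    · -- GG does not depend on the coordinate at p
      intro yb u aa taa
      refine Finset.sum_congr rfl fun hB _ => ?_
      have harg : ∀ v : V, (v = p → False) →
          (if hi : v ∈ Z ∧ ¬ Reach G (↑Z) p v then hB ⟨⟨v, hi.1⟩, hi.2⟩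
            else Function.update yb p aa v) =
          (if hi : v ∈ Z ∧ ¬ Reach G (↑Z) p v then hB ⟨⟨v, hi.1⟩, hi.2⟩ else yb v) := by
        intro v hv
        by_cases hz : v ∈ Z ∧ ¬ Reach G (↑Z) p v
        · simp [hz]
        · simp [hz, Function.update_of_ne hv]
      congr 1
      · refine Finset.prod_congr rfl fun k hk => ?_
        rw [Finset.mem_filter] at hk
        exact hΨ k _ _ fun v hv => harg v (fun e => (hsplit k hk.2 v hv).2 e)
      · refine Finset.prod_congr rfl fun i hi => ?_
        rw [Finset.mem_filter] at hi
        have hip : i ≠ p := fun e => hi.2 (e ▸ hAp)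
        rw [harg i hip, Function.update_of_ne hip]
  intro x w a a' ta ta' b b' tb tb'
  have e1 : ∀ (aa : S p) (taa : T p) (bb : S q) (tbb : T q),
      f (Function.update (Function.update x p aa) q bb)
        (Function.update (Function.update w p taa) q tbb)
      = FF (Function.update x p aa) (Function.update w p taa) *
        GG (Function.update x q bb) (Function.update w q tbb) := by
    intro aa taa bb tbb
    rw [key, hFq]
    simp only [Function.update_comm hpq]
    rw [hGp]
  rw [e1, e1, e1, e1]
  ring
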